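/- Let (Ω, 𝓕, P) be a probability space and (X_i)_{i≥1} real-valued random variables. Let (r_n)_{n≥1} be positive integers, (w_n)_{n≥1} real thresholds, and (v_n)_{n≥1} positive reals. Assume: (i) for every n, for all integers i ≥ 1 and 0 ≤ j ≤ k with i + k ≤ r_n, P(X_i > w_n, X_{i+j} > w_n, X_{i+k} > w_n) = P(X_1 > w_n, X_{1+j} > w_n, X_{1+k} > w_n); (ii) 0 < P(X_1 > w_n) ≤ c₀ · v_n for all n, for some constant c₀ > 0; (iii) there exist nonnegative numbers s̃_n(j,k), for 1 ≤ j ≤ k ≤ r_n − 1, with s̃_n(j,k) ≥ P(X_{1+j} > w_n, X_{1+k} > w_n | X_1 > w_n) and sup_n ∑_{1≤j≤k≤r_n−1} s̃_n(j,k) < ∞. Then there is a constant K such that for all n, E[(∑_{i=1}^{r_n} 1{X_i > w_n})³] ≤ K · r_n · v_n. -/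

import Mathlib

open MeasureTheory
open scoped ENNReal

private lemma card_six' {α : Type*} [DecidableEq α] (x1 x2 x3 x4 x5 x6 : α) :
    ({x1,x2,x3,x4,x5,x6} : Finset α).card ≤ 6 := by
  have h : ({x1,x2,x3,x4,x5,x6} : Finset α) = [x1,x2,x3,x4,x5,x6].toFinset := by simp
  rw [h]; simpa using [x1,x2,x3,x4,x5,x6].toFinset_card_le

set_option maxHeartbeats 1600000 in
private lemma sort3_spec (a b c m d M : ℕ) (hm : m = min a (min b c))
    (hM : M = max a (max b c)) (hd : d = a + b + c - m - M) :
    m ≤ d ∧ d ≤ M ∧ (m = a ∨ m = b ∨ m = c) ∧ (M = a ∨ M = b ∨ M = c) ∧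
      ((a=m∧b=d∧c=M)∨(a=m∧b=M∧c=d)∨(a=d∧b=m∧c=M)∨(a=d∧b=M∧c=m)∨(a=M∧b=m∧c=d)∨(a=M∧b=d∧c=m)) := by
  have h1 : m ≤ a ∧ m ≤ b ∧ m ≤ c ∧ (m = a ∨ m = b ∨ m = c) := by omega
  have h2 : a ≤ M ∧ b ≤ M ∧ c ≤ M ∧ (M = a ∨ M = b ∨ M = c) := by omega
  clear hm hM
  obtain ⟨hma, hmb, hmc, hm⟩ := h1
  obtain ⟨hMa, hMb, hMc, hM⟩ := h2
  refine ⟨by omega, by omega, hm, hM, ?_⟩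
  rcases hm with rfl|rfl|rfl <;> rcases hM with rfl|rfl|rfl <;> omega

/-- the sorting map on triples -/
private def ψ (x : ℕ × ℕ × ℕ) : ℕ × ℕ × ℕ :=
  (min x.1 (min x.2.1 x.2.2),
   (x.1 + x.2.1 + x.2.2 - min x.1 (min x.2.1 x.2.2) - max x.1 (max x.2.1 x.2.2))
     - min x.1 (min x.2.1 x.2.2),
   max x.1 (max x.2.1 x.2.2) - min x.1 (min x.2.1 x.2.2))

private lemma ψ_spec (a b c : ℕ) : ∃ m d M : ℕ, ψ (a, b, c) = (m, d - m, M - m) ∧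
    m ≤ d ∧ d ≤ M ∧ (m = a ∨ m = b ∨ m = c) ∧ (M = a ∨ M = b ∨ M = c) ∧
    ((a=m∧b=d∧c=M)∨(a=m∧b=M∧c=d)∨(a=d∧b=m∧c=M)∨(a=d∧b=M∧c=m)∨(a=M∧b=m∧c=d)∨(a=M∧b=d∧c=m)) :=
  ⟨min a (min b c), a + b + c - min a (min b c) - max a (max b c), max a (max b c), rfl,
    sort3_spec a b c _ _ _ rfl rfl rfl⟩

private lemma fiber_card_le_six (T : Finset (ℕ × ℕ × ℕ)) (y : ℕ × ℕ × ℕ) :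
    (T.filter (fun x => ψ x = y)).card ≤ 6 := by
  obtain ⟨y1, y2, y3⟩ := y
  have hsub : T.filter (fun x => ψ x = (y1, y2, y3)) ⊆
      ({(y1, y1 + y2, y1 + y3), (y1, y1 + y3, y1 + y2), (y1 + y2, y1, y1 + y3),
        (y1 + y2, y1 + y3, y1), (y1 + y3, y1, y1 + y2), (y1 + y3, y1 + y2, y1)} :
        Finset (ℕ × ℕ × ℕ)) := by
    rintro ⟨a, b, c⟩ hx
    simp only [Finset.mem_filter] at hx
    obtain ⟨-, hψx⟩ := hx
    obtain ⟨m, d, M, hψeq, hmd, hdM, hmor, hMor, hdisj⟩ := ψ_spec a b c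
    rw [hψeq] at hψx
    obtain ⟨hy1, hy2, hy3⟩ : m = y1 ∧ d - m = y2 ∧ M - m = y3 := by
      simpa [Prod.ext_iff] using hψx
    simp only [Finset.mem_insert, Finset.mem_singleton, Prod.mk.injEq]
    rcases hdisj with ⟨e1,e2,e3⟩|⟨e1,e2,e3⟩|⟨e1,e2,e3⟩|⟨e1,e2,e3⟩|⟨e1,e2,e3⟩|⟨e1,e2,e3⟩
    · exact Or.inl ⟨by omega, by omega, by omega⟩
    · exact Or.inr (Or.inl ⟨by omega, by omega, by omega⟩)
    · exact Or.inr (Or.inr (Or.inl ⟨by omega, by omega, by omega⟩))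
    · exact Or.inr (Or.inr (Or.inr (Or.inl ⟨by omega, by omega, by omega⟩)))
    · exact Or.inr (Or.inr (Or.inr (Or.inr (Or.inl ⟨by omega, by omega, by omega⟩))))
    · exact Or.inr (Or.inr (Or.inr (Or.inr (Or.inr ⟨by omega, by omega, by omega⟩))))
  exact le_trans (Finset.card_le_card hsub) (card_six' _ _ _ _ _ _)

/-- triple exceedance set -/
private def trip {Ω : Type*} (X : ℕ → Ω → ℝ) (W : ℝ) (a b c : ℕ) : Set Ω :=
  {ω | X a ω > W ∧ X b ω > W ∧ X c ω > W}

private lemma mem_trip {Ω : Type*} {X : ℕ → Ω → ℝ} {W : ℝ} {a b c : ℕ} {ω : Ω} :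
    ω ∈ trip X W a b c ↔ (X a ω > W ∧ X b ω > W ∧ X c ω > W) := Iff.rfl

private lemma trip_perm {Ω : Type*} (X : ℕ → Ω → ℝ) (W : ℝ) {a b c m d M : ℕ}
    (h : (a=m∧b=d∧c=M)∨(a=m∧b=M∧c=d)∨(a=d∧b=m∧c=M)∨(a=d∧b=M∧c=m)∨(a=M∧b=m∧c=d)∨(a=M∧b=d∧c=m)) :
    trip X W a b c = trip X W m d M := by
  rcases h with ⟨rfl,rfl,rfl⟩|⟨rfl,rfl,rfl⟩|⟨rfl,rfl,rfl⟩|⟨rfl,rfl,rfl⟩|⟨rfl,rfl,rfl⟩|⟨rfl,rfl,rfl⟩ <;>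
    · apply Set.ext
      intro ω
      simp only [mem_trip]
      try tauto

private lemma sum_product_snd {β : Type*} [AddCommMonoid β] (s : Finset ℕ)
    (t : Finset (ℕ × ℕ)) (G : ℕ × ℕ → β) :
    ∑ p ∈ s ×ˢ t, G p.2 = s.card • ∑ z ∈ t, G z := by
  rw [Finset.sum_product]
  simp [Finset.sum_const]

private lemma cube_expand (I : Finset ℕ) (f : ℕ → ℝ≥0∞) :
    (∑ i ∈ I, f i) ^ 3 = ∑ x ∈ I ×ˢ I ×ˢ I, f x.1 * (f x.2.1 * f x.2.2) := by
  rw [Finset.sum_product]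
  simp_rw [Finset.sum_product, ← Finset.mul_sum, ← Finset.sum_mul]
  ring

theorem stmt1 {Ω : Type*} [MeasurableSpace Ω] (P : Measure Ω) [IsProbabilityMeasure P]
    (X : ℕ → Ω → ℝ) (r : ℕ → ℕ) (w : ℕ → ℝ) (v : ℕ → ℝ) (c₀ : ℝ)
    (hr : ∀ n, 0 < r n) (hv : ∀ n, 0 < v n) (hc₀ : 0 < c₀)
    (hshift : ∀ n, ∀ i j k : ℕ, 1 ≤ i → j ≤ k → i + k ≤ r n →
      P {ω | X i ω > w n ∧ X (i + j) ω > w n ∧ X (i + k) ω > w n}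
        = P {ω | X 1 ω > w n ∧ X (1 + j) ω > w n ∧ X (1 + k) ω > w n})
    (hmarg_pos : ∀ n, 0 < P {ω | X 1 ω > w n})
    (hmarg_le : ∀ n, P {ω | X 1 ω > w n} ≤ ENNReal.ofReal (c₀ * v n))
    (s' : ℕ → ℕ → ℕ → ℝ)
    (hs'nonneg : ∀ n j k, 1 ≤ j → j ≤ k → k ≤ r n - 1 → 0 ≤ s' n j k)
    (hs'maj : ∀ n j k, 1 ≤ j → j ≤ k → k ≤ r n - 1 →
      P ({ω | X (1 + j) ω > w n ∧ X (1 + k) ω > w n} ∩ {ω | X 1 ω > w n})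
          / P {ω | X 1 ω > w n} ≤ ENNReal.ofReal (s' n j k))
    (hs'sum : ∃ S : ℝ, ∀ n,
      ∑ k ∈ Finset.Icc 1 (r n - 1), ∑ j ∈ Finset.Icc 1 k, s' n j k ≤ S) :
    ∃ K : ℝ, ∀ n,
      ∫⁻ ω, (∑ i ∈ Finset.Icc 1 (r n), if X i ω > w n then (1 : ℝ≥0∞) else 0) ^ 3 ∂P
        ≤ ENNReal.ofReal (K * r n * v n) := by
  classical
  obtain ⟨S, hS⟩ := hs'sum
  have hS0 : 0 ≤ S := by
    refine le_trans ?_ (hS 0)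
    refine Finset.sum_nonneg fun k hk => Finset.sum_nonneg fun j hj => ?_
    simp only [Finset.mem_Icc] at hk hj
    exact hs'nonneg 0 j k hj.1 hj.2 hk.2
  refine ⟨6 * c₀ * (1 + 2 * S), fun n => ?_⟩
  have hR1 : 1 ≤ r n := hr n
  -- abbreviations (no `set` to keep substitution working)
  let R := r n
  let W := w n
  have hA0 : P {ω | X 1 ω > w n} ≠ 0 := (hmarg_pos n).ne'
  have hAtop : P {ω | X 1 ω > w n} ≠ ∞ := measure_ne_top P _
  have hAle : P {ω | X 1 ω > w n} ≤ ENNReal.ofReal (c₀ * v n) := hmarg_le n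
  set I : Finset ℕ := Finset.Icc 1 (r n) with hI
  set T : Finset (ℕ × ℕ × ℕ) := I ×ˢ I ×ˢ I with hT
  set U : Finset (ℕ × ℕ × ℕ) :=
    (I ×ˢ Finset.range (r n) ×ˢ Finset.range (r n)).filter
      (fun y => y.2.1 ≤ y.2.2 ∧ y.1 + y.2.2 ≤ r n) with hU
  set u : ℕ → ℕ → ℝ := fun j k => if k = 0 then 1 else s' n (if j = 0 then k else j) k with hu
  have hu_nonneg : ∀ j k : ℕ, j ≤ k → k < r n → 0 ≤ u j k := by
    intro j k hjk hkR
    by_cases hk : k = 0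
    · simp [hu, hk]
    · have hk1 : 1 ≤ k := Nat.one_le_iff_ne_zero.mpr hk
      simp only [hu, if_neg hk]
      by_cases hj : j = 0
      · simpa [hj] using hs'nonneg n k k hk1 le_rfl (by omega)
      · simpa [hj] using hs'nonneg n j k (Nat.one_le_iff_ne_zero.mpr hj) hjk (by omega)
  -- Step A
  have stepA : ∫⁻ ω, (∑ i ∈ I, if X i ω > w n then (1 : ℝ≥0∞) else 0) ^ 3 ∂P
      ≤ ∑ x ∈ T, P (trip X (w n) x.1 x.2.1 x.2.2) := by
    have expand : ∀ ω : Ω, (∑ i ∈ I, if X i ω > w n then (1 : ℝ≥0∞) else 0) ^ 3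
        = ∑ x ∈ T, ((if X x.1 ω > w n then (1 : ℝ≥0∞) else 0) *
            ((if X x.2.1 ω > w n then (1 : ℝ≥0∞) else 0) *
             (if X x.2.2 ω > w n then (1 : ℝ≥0∞) else 0))) := fun ω =>
      cube_expand I (fun i => if X i ω > w n then (1 : ℝ≥0∞) else 0)
    calc ∫⁻ ω, (∑ i ∈ I, if X i ω > w n then (1 : ℝ≥0∞) else 0) ^ 3 ∂P
        = ∫⁻ ω, ∑ x ∈ T, ((if X x.1 ω > w n then (1 : ℝ≥0∞) else 0) *
            ((if X x.2.1 ω > w n then (1 : ℝ≥0∞) else 0) *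
             (if X x.2.2 ω > w n then (1 : ℝ≥0∞) else 0))) ∂P := lintegral_congr expand
      _ ≤ ∫⁻ ω, ∑ x ∈ T, (toMeasurable P (trip X (w n) x.1 x.2.1 x.2.2)).indicator
            (fun _ => (1 : ℝ≥0∞)) ω ∂P := by
          refine lintegral_mono fun ω => Finset.sum_le_sum fun x _ => ?_
          by_cases ha : X x.1 ω > w n
          · by_cases hb : X x.2.1 ω > w n
            · by_cases hc : X x.2.2 ω > w n
              · have hm' : ω ∈ toMeasurable P (trip X (w n) x.1 x.2.1 x.2.2) :=
                  subset_toMeasurable _ _ (mem_trip.mpr ⟨ha, hb, hc⟩)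
                simp [Set.indicator_of_mem hm', ha, hb, hc]
              · simp [hc]
            · simp [hb]
          · simp [ha]
      _ = ∑ x ∈ T, P (toMeasurable P (trip X (w n) x.1 x.2.1 x.2.2)) := by
          rw [lintegral_finset_sum]
          · exact Finset.sum_congr rfl fun x _ => by
              rw [lintegral_indicator_const (measurableSet_toMeasurable P _), one_mul]
          · exact fun x _ => measurable_const.indicator (measurableSet_toMeasurable P _)
      _ = ∑ x ∈ T, P (trip X (w n) x.1 x.2.1 x.2.2) :=
          Finset.sum_congr rfl fun x _ => measure_toMeasurable _
  -- Step B
  have stepB : ∀ x ∈ T, P (trip X (w n) x.1 x.2.1 x.2.2)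
      = P (trip X (w n) 1 (1 + (ψ x).2.1) (1 + (ψ x).2.2)) := by
    rintro ⟨a, b, c⟩ hx
    simp only [hT, Finset.mem_product, hI, Finset.mem_Icc] at hx
    obtain ⟨⟨ha1, haR⟩, ⟨hb1, hbR⟩, ⟨hc1, hcR⟩⟩ := hx
    obtain ⟨m, d, M, hψeq, hmd, hdM, hmor, hMor, hdisj⟩ := ψ_spec a b c
    have h1m : 1 ≤ m := by rcases hmor with h|h|h <;> omega
    have hMR : M ≤ r n := by rcases hMor with h|h|h <;> omega
    have hsetEq : trip X (w n) a b c = trip X (w n) m d M := trip_perm X (w n) hdisj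
    have hsh := hshift n m (d - m) (M - m) h1m (by omega) (by omega)
    have e1 : m + (d - m) = d := by omega
    have e2 : m + (M - m) = M := by omega
    rw [e1, e2] at hsh
    rw [hψeq]
    show P (trip X (w n) a b c) = P (trip X (w n) 1 (1 + (d - m)) (1 + (M - m)))
    rw [hsetEq]
    exact hsh
  -- ψ maps T into U
  have hmaps : ∀ x ∈ T, ψ x ∈ U := by
    rintro ⟨a, b, c⟩ hx
    simp only [hT, Finset.mem_product, hI, Finset.mem_Icc] at hx
    obtain ⟨⟨ha1, haR⟩, ⟨hb1, hbR⟩, ⟨hc1, hcR⟩⟩ := hx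
    obtain ⟨m, d, M, hψeq, hmd, hdM, hmor, hMor, hdisj⟩ := ψ_spec a b c
    have h1m : 1 ≤ m := by rcases hmor with h|h|h <;> omega
    have hMR : M ≤ r n := by rcases hMor with h|h|h <;> omega
    rw [hψeq]
    simp only [hU, Finset.mem_filter, Finset.mem_product, hI, Finset.mem_Icc,
      Finset.mem_range]
    exact ⟨⟨⟨h1m, by omega⟩, by omega, by omega⟩, by omega, by omega⟩
  -- Step C : counting
  have stepC : ∑ x ∈ T, P (trip X (w n) x.1 x.2.1 x.2.2)
      ≤ 6 * ∑ y ∈ U, P (trip X (w n) 1 (1 + y.2.1) (1 + y.2.2)) := by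
    calc ∑ x ∈ T, P (trip X (w n) x.1 x.2.1 x.2.2)
        = ∑ x ∈ T, P (trip X (w n) 1 (1 + (ψ x).2.1) (1 + (ψ x).2.2)) :=
          Finset.sum_congr rfl stepB
      _ = ∑ y ∈ U, ∑ x ∈ T.filter (fun x => ψ x = y),
            P (trip X (w n) 1 (1 + y.2.1) (1 + y.2.2)) :=
          (Finset.sum_fiberwise_of_maps_to' hmaps
            (fun y => P (trip X (w n) 1 (1 + y.2.1) (1 + y.2.2)))).symm
      _ = ∑ y ∈ U, (T.filter (fun x => ψ x = y)).card •
            P (trip X (w n) 1 (1 + y.2.1) (1 + y.2.2)) := by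
          simp [Finset.sum_const]
      _ ≤ ∑ y ∈ U, 6 * P (trip X (w n) 1 (1 + y.2.1) (1 + y.2.2)) := by
          refine Finset.sum_le_sum fun y _ => ?_
          rw [nsmul_eq_mul]
          exact mul_le_mul_left (by exact_mod_cast fiber_card_le_six T y) _
      _ = 6 * ∑ y ∈ U, P (trip X (w n) 1 (1 + y.2.1) (1 + y.2.2)) := by
          rw [Finset.mul_sum]
  -- Step D : pointwise bound over U
  have stepD : ∀ y ∈ U, P (trip X (w n) 1 (1 + y.2.1) (1 + y.2.2))
      ≤ ENNReal.ofReal (c₀ * v n * u y.2.1 y.2.2) := by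
    rintro ⟨mm, j, k⟩ hy
    simp only [hU, Finset.mem_filter, Finset.mem_product, hI, Finset.mem_Icc,
      Finset.mem_range] at hy
    obtain ⟨⟨⟨hmm1, hmmR⟩, hjR, hkR⟩, hjk, hmk⟩ := hy
    by_cases hk : k = 0
    · have hj : j = 0 := by omega
      subst hk; subst hj
      have hset : trip X (w n) 1 (1 + 0) (1 + 0) = {ω | X 1 ω > w n} := by
        ext ω; simp [trip]
      simp only [hset]
      simpa [hu] using hAle
    · have hk1 : 1 ≤ k := Nat.one_le_iff_ne_zero.mpr hk
      have hkR1 : k ≤ r n - 1 := by omega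
      have hj'1 : 1 ≤ (if j = 0 then k else j) := by split <;> omega
      have hj'k : (if j = 0 then k else j) ≤ k := by split <;> omega
      have hset : trip X (w n) 1 (1 + j) (1 + k)
          = {ω | X (1 + (if j = 0 then k else j)) ω > w n ∧ X (1 + k) ω > w n}
              ∩ {ω | X 1 ω > w n} := by
        by_cases hj0 : j = 0
        · subst hj0
          simp only [if_pos rfl]
          ext ω; simp only [trip, Set.mem_setOf_eq, Set.mem_inter_iff]; tauto
        · simp only [if_neg hj0]
          ext ω; simp only [trip, Set.mem_setOf_eq, Set.mem_inter_iff]; tauto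
      have hmaj := hs'maj n (if j = 0 then k else j) k hj'1 hj'k hkR1
      rw [ENNReal.div_le_iff hA0 hAtop] at hmaj
      have hs'nn : 0 ≤ s' n (if j = 0 then k else j) k :=
        hs'nonneg n _ k hj'1 hj'k hkR1
      calc P (trip X (w n) 1 (1 + j) (1 + k))
          = P ({ω | X (1 + (if j = 0 then k else j)) ω > w n ∧ X (1 + k) ω > w n}
              ∩ {ω | X 1 ω > w n}) := by rw [hset]
        _ ≤ ENNReal.ofReal (s' n (if j = 0 then k else j) k) * P {ω | X 1 ω > w n} := hmaj
        _ ≤ ENNReal.ofReal (s' n (if j = 0 then k else j) k) * ENNReal.ofReal (c₀ * v n) :=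
            mul_le_mul_right hAle _
        _ = ENNReal.ofReal (c₀ * v n * u j k) := by
            rw [← ENNReal.ofReal_mul hs'nn]
            congr 1
            simp only [hu, if_neg hk]
            ring
  -- Step E
  set Sig : ℝ := ∑ y ∈ Finset.range (r n) ×ˢ Finset.range (r n),
      (if y.1 ≤ y.2 then u y.1 y.2 else 0) with hSig
  have hSigle : Sig ≤ 1 + 2 * S := by
    have hρ : Finset.range (r n) = insert 0 (Finset.Icc 1 (r n - 1)) := by
      ext x; simp only [Finset.mem_range, Finset.mem_insert, Finset.mem_Icc]; omega
    have hswap : Sig = ∑ k ∈ Finset.range (r n), ∑ j ∈ Finset.range (r n),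
        (if j ≤ k then u j k else 0) := by
      rw [hSig, Finset.sum_product]
      exact Finset.sum_comm
    have hinner : ∀ k ∈ Finset.range (r n), ∑ j ∈ Finset.range (r n),
        (if j ≤ k then u j k else 0) = u 0 k + ∑ j ∈ Finset.Icc 1 k, u j k := by
      intro k hk
      simp only [Finset.mem_range] at hk
      rw [← Finset.sum_filter]
      have hfe : (Finset.range (r n)).filter (· ≤ k) = insert 0 (Finset.Icc 1 k) := by
        ext x
        simp only [Finset.mem_filter, Finset.mem_range, Finset.mem_insert, Finset.mem_Icc]
        omega
      rw [hfe, Finset.sum_insert (by simp)]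
    rw [hswap, Finset.sum_congr rfl hinner, hρ, Finset.sum_insert (by simp)]
    have h00 : u 0 0 + ∑ j ∈ Finset.Icc 1 0, u j 0 = 1 := by simp [hu]
    rw [h00, Finset.sum_add_distrib]
    have hb2 : ∑ k ∈ Finset.Icc 1 (r n - 1), ∑ j ∈ Finset.Icc 1 k, u j k ≤ S := by
      refine le_trans (le_of_eq (Finset.sum_congr rfl fun k hk => Finset.sum_congr rfl
        fun j hj => ?_)) (hS n)
      simp only [Finset.mem_Icc] at hk hj
      simp [hu, show k ≠ 0 by omega, show j ≠ 0 by omega]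
    have hb1 : ∑ k ∈ Finset.Icc 1 (r n - 1), u 0 k ≤ S := by
      refine le_trans (Finset.sum_le_sum ?_) hb2
      intro k hk
      simp only [Finset.mem_Icc] at hk
      have hk0 : k ≠ 0 := by omega
      have huk : u 0 k = u k k := by simp [hu, hk0]
      rw [huk]
      refine Finset.single_le_sum (f := fun j => u j k)
        (fun j hj => ?_) (Finset.mem_Icc.mpr ⟨hk.1, le_rfl⟩)
      simp only [Finset.mem_Icc] at hj
      exact hu_nonneg j k hj.2 (by omega)
    linarith
  have stepE : ∑ y ∈ U, ENNReal.ofReal (c₀ * v n * u y.2.1 y.2.2)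
      ≤ (r n : ℝ≥0∞) * ENNReal.ofReal (c₀ * v n * Sig) := by
    have h1 : ∑ y ∈ U, ENNReal.ofReal (c₀ * v n * u y.2.1 y.2.2)
        ≤ ∑ y ∈ I ×ˢ Finset.range (r n) ×ˢ Finset.range (r n),
            (if y.2.1 ≤ y.2.2 then ENNReal.ofReal (c₀ * v n * u y.2.1 y.2.2) else 0) := by
      rw [hU, Finset.sum_filter]
      refine Finset.sum_le_sum fun y hy => ?_
      split_ifs with h h' <;>
        first
          | exact le_rfl
          | exact zero_le
          | exact absurd h.1 h'
    have h3 : ∑ y ∈ Finset.range (r n) ×ˢ Finset.range (r n),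
        (if y.1 ≤ y.2 then ENNReal.ofReal (c₀ * v n * u y.1 y.2) else 0)
        = ENNReal.ofReal (c₀ * v n * Sig) := by
      have hterm : ∀ y ∈ Finset.range (r n) ×ˢ Finset.range (r n),
          (if y.1 ≤ y.2 then ENNReal.ofReal (c₀ * v n * u y.1 y.2) else 0)
          = ENNReal.ofReal (c₀ * v n * (if y.1 ≤ y.2 then u y.1 y.2 else 0)) := by
        intro y _
        split_ifs <;> simp
      rw [Finset.sum_congr rfl hterm, ← ENNReal.ofReal_sum_of_nonneg, hSig, ← Finset.mul_sum]
      intro y hy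
      simp only [Finset.mem_product, Finset.mem_range] at hy
      split_ifs with h
      · exact mul_nonneg (mul_nonneg hc₀.le (hv n).le) (hu_nonneg _ _ h hy.2)
      · simp
    have h2 : ∑ y ∈ I ×ˢ Finset.range (r n) ×ˢ Finset.range (r n),
        (if y.2.1 ≤ y.2.2 then ENNReal.ofReal (c₀ * v n * u y.2.1 y.2.2) else 0)
        = (r n : ℝ≥0∞) * ENNReal.ofReal (c₀ * v n * Sig) := by
      have hcardI : I.card = r n := by rw [hI, Nat.card_Icc]; omega
      calc ∑ y ∈ I ×ˢ Finset.range (r n) ×ˢ Finset.range (r n),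
          (if y.2.1 ≤ y.2.2 then ENNReal.ofReal (c₀ * v n * u y.2.1 y.2.2) else 0)
          = I.card • ∑ z ∈ Finset.range (r n) ×ˢ Finset.range (r n),
              (if z.1 ≤ z.2 then ENNReal.ofReal (c₀ * v n * u z.1 z.2) else 0) :=
            sum_product_snd I (Finset.range (r n) ×ˢ Finset.range (r n))
              (fun z => if z.1 ≤ z.2 then ENNReal.ofReal (c₀ * v n * u z.1 z.2) else 0)
        _ = (r n : ℝ≥0∞) * ENNReal.ofReal (c₀ * v n * Sig) := by
            rw [hcardI, nsmul_eq_mul, h3]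
    exact h1.trans (le_of_eq h2)
  -- putting everything together
  calc ∫⁻ ω, (∑ i ∈ I, if X i ω > w n then (1 : ℝ≥0∞) else 0) ^ 3 ∂P
      ≤ ∑ x ∈ T, P (trip X (w n) x.1 x.2.1 x.2.2) := stepA
    _ ≤ 6 * ∑ y ∈ U, P (trip X (w n) 1 (1 + y.2.1) (1 + y.2.2)) := stepC
    _ ≤ 6 * ∑ y ∈ U, ENNReal.ofReal (c₀ * v n * u y.2.1 y.2.2) :=
        mul_le_mul_right (Finset.sum_le_sum stepD) _
    _ ≤ 6 * ((r n : ℝ≥0∞) * ENNReal.ofReal (c₀ * v n * Sig)) := mul_le_mul_right stepE _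
    _ ≤ 6 * ((r n : ℝ≥0∞) * ENNReal.ofReal (c₀ * v n * (1 + 2 * S))) := by
        refine mul_le_mul_right (mul_le_mul_right (ENNReal.ofReal_le_ofReal ?_) _) _
        exact mul_le_mul_of_nonneg_left hSigle (mul_nonneg hc₀.le (hv n).le)
    _ = ENNReal.ofReal (6 * c₀ * (1 + 2 * S) * r n * v n) := by
        rw [show ((6 : ℝ≥0∞)) = ENNReal.ofReal 6 by norm_num,
          ← ENNReal.ofReal_natCast (r n),
          ← ENNReal.ofReal_mul (Nat.cast_nonneg _),
          ← ENNReal.ofReal_mul (by norm_num : (0:ℝ) ≤ 6)]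
        congr 1
        ring
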